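/- Let g ≥ 0, let b_1, b_2 ∈ ℂ[λ] be coprime polynomials of degree exactly g+1 with b_1 having g+1 pairwise distinct roots, let a ∈ ℂ[λ] have degree at most 2g, and let c_1, c_2 ∈ ℂ[λ] be polynomials of degree at most g with c_1·b_2 − c_2·b_1 = a. Then the sum over the roots β of b_1 of a(β)/(b_1'(β)·b_2(β)) equals the coefficient of λ^g in c_1 divided by the leading coefficient of b_1. In particular, this sum is nonzero if and only if deg c_1 = g. -/

import Mathlib

open Polynomial

theorem stmt10 (g : ℕ) (b₁ b₂ a c₁ c₂ : Polynomial ℂ)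
    (hdeg1 : b₁.degree = (g + 1 : ℕ)) (hdeg2 : b₂.degree = (g + 1 : ℕ))
    (hcop : ∀ μ : ℂ, ¬ (b₁.eval μ = 0 ∧ b₂.eval μ = 0))
    (hnodup : b₁.roots.Nodup)
    (ha : a.degree ≤ (2 * g : ℕ))
    (hc1 : c₁.degree ≤ (g : ℕ)) (hc2 : c₂.degree ≤ (g : ℕ))
    (heq : c₁ * b₂ - c₂ * b₁ = a) :
    (∑ β ∈ b₁.roots.toFinset, a.eval β / ((derivative b₁).eval β * b₂.eval β))
      = c₁.coeff g / b₁.leadingCoeff ∧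
    ((∑ β ∈ b₁.roots.toFinset, a.eval β / ((derivative b₁).eval β * b₂.eval β)) ≠ 0
      ↔ c₁.degree = (g : ℕ)) := by
  classical
  have hb₁ne : b₁ ≠ 0 := fun h => by rw [h, degree_zero] at hdeg1; cases hdeg1
  have hlc : b₁.leadingCoeff ≠ 0 := leadingCoeff_ne_zero.mpr hb₁ne
  have hnat : b₁.natDegree = g + 1 := natDegree_eq_of_degree_eq_some hdeg1
  set s : Finset ℂ := b₁.roots.toFinset with hs
  have hsval : s.val = b₁.roots := Multiset.dedup_eq_self.mpr hnodup
  have hcard : s.card = g + 1 := by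
    have h1 : b₁.roots.card = b₁.natDegree :=
      (splits_iff_card_roots.mp (IsAlgClosed.splits b₁))
    rw [Finset.card, hsval, h1, hnat]
  have hinj : Set.InjOn (id : ℂ → ℂ) s := fun x _ y _ h => h
  -- b₁ = C lc * nodal s id
  have hnodal : Lagrange.nodal s id = (b₁.roots.map fun a => X - C a).prod := by
    rw [Lagrange.nodal_eq, Finset.prod_eq_multiset_prod, hsval]
    rfl
  have hb₁eq : b₁ = C b₁.leadingCoeff * Lagrange.nodal s id := by
    rw [hnodal]
    exact Splits.eq_prod_roots (IsAlgClosed.splits b₁)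
  -- eval of derivative at roots
  have hderiv : ∀ β ∈ s, (derivative b₁).eval β
      = b₁.leadingCoeff * (Lagrange.nodalWeight s id β)⁻¹ := by
    intro β hβ
    conv_lhs => rw [hb₁eq]
    rw [derivative_mul, derivative_C, zero_mul, zero_add, eval_mul, eval_C,
      Lagrange.nodalWeight_eq_eval_derivative_nodal hβ, inv_inv]
    rfl
  have hwne : ∀ β ∈ s, Lagrange.nodalWeight s id β ≠ 0 :=
    fun β hβ => Lagrange.nodalWeight_ne_zero hinj hβ
  have hb2ne : ∀ β ∈ s, b₂.eval β ≠ 0 := by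
    intro β hβ h
    exact hcop β ⟨(mem_roots hb₁ne).mp (Multiset.mem_toFinset.mp hβ), h⟩
  have hroot : ∀ β ∈ s, b₁.eval β = 0 := fun β hβ =>
    (mem_roots hb₁ne).mp (Multiset.mem_toFinset.mp hβ)
  -- each term
  have hterm : ∀ β ∈ s, a.eval β / ((derivative b₁).eval β * b₂.eval β)
      = c₁.eval β * Lagrange.nodalWeight s id β / b₁.leadingCoeff := by
    intro β hβ
    have haeval : a.eval β = c₁.eval β * b₂.eval β := by
      rw [← heq]; simp [hroot β hβ]
    rw [haeval, hderiv β hβ]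
    field_simp [hb2ne β hβ, hwne β hβ]
  -- coefficient identity via Lagrange interpolation
  have hc1lt : c₁.degree < s.card := by
    rw [hcard]
    exact lt_of_le_of_lt hc1 (by exact_mod_cast WithBot.coe_lt_coe.mpr (Nat.lt_succ_self g))
  have hinterp : c₁ = Lagrange.interpolate s id c₁.eval :=
    Lagrange.eq_interpolate hinj hc1lt
  have hbasis_coeff : ∀ β ∈ s, (Lagrange.basis s id β).coeff g
      = Lagrange.nodalWeight s id β := by
    intro β hβ
    have : Lagrange.basis s id β
        = C (Lagrange.nodalWeight s id β) * Lagrange.nodal (s.erase β) id := by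
      rw [Lagrange.basis_eq_prod_sub_inv_mul_nodal_div hβ]
      congr 1
      rw [Lagrange.nodal_eq_mul_nodal_erase hβ]
      rw [mul_div_cancel_left₀]
      exact X_sub_C_ne_zero _
    rw [this, coeff_C_mul]
    have hmono : (Lagrange.nodal (s.erase β) id).Monic := Lagrange.nodal_monic
    have hnd : (Lagrange.nodal (s.erase β) id).natDegree = g := by
      rw [Lagrange.natDegree_nodal, Finset.card_erase_of_mem hβ, hcard]
      omega
    rw [← hnd, hmono.coeff_natDegree, mul_one]
  have hcoeff : c₁.coeff g = ∑ β ∈ s, c₁.eval β * Lagrange.nodalWeight s id β := by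
    conv_lhs => rw [hinterp]
    rw [Lagrange.interpolate_apply, finset_sum_coeff]
    refine Finset.sum_congr rfl fun β hβ => ?_
    rw [coeff_C_mul, hbasis_coeff β hβ]
  have hsum : (∑ β ∈ s, a.eval β / ((derivative b₁).eval β * b₂.eval β))
      = c₁.coeff g / b₁.leadingCoeff := by
    rw [Finset.sum_congr rfl hterm, ← Finset.sum_div, hcoeff]
  refine ⟨hsum, ?_⟩
  rw [hsum]
  constructor
  · intro h
    have hcg : c₁.coeff g ≠ 0 := fun hz => h (by rw [hz, zero_div])
    exact le_antisymm hc1 (le_degree_of_ne_zero hcg)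
  · intro h
    have hc₁ne : c₁ ≠ 0 := fun hz => by simp [hz] at h
    have : c₁.coeff g ≠ 0 := by
      have := natDegree_eq_of_degree_eq_some h
      rw [← this]
      exact mt leadingCoeff_eq_zero.mp hc₁ne
    exact div_ne_zero this hlc
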